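/- Let A be an n × m real matrix of rank r and s < r. Then max over U ∈ ℝ^{n×s} with orthonormal columns of ‖UUᵀA‖² equals max over {A₁ ∈ ℝ^{n×m} : rank A₁ ≤ s, ⟨A₁, A⟩ = ‖A₁‖²} of ‖A₁‖², and both equal ∑_{i=1}^s σᵢ² where σᵢ are the singular values of A in decreasing order. -/

import Mathlib

open Matrix

/-- The Frobenius (trace) inner product on real matrices. -/
noncomputable def frobInner {n m : ℕ} (A B : Matrix (Fin n) (Fin m) ℝ) : ℝ :=
  ∑ i, ∑ j, A i j * B i j

/-- The squared Frobenius norm. -/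
noncomputable def frobSq {n m : ℕ} (A : Matrix (Fin n) (Fin m) ℝ) : ℝ := frobInner A A

/-- The Frobenius norm. -/
noncomputable def frobNorm {n m : ℕ} (A : Matrix (Fin n) (Fin m) ℝ) : ℝ :=
  Real.sqrt (frobSq A)

/-- The `n × m` rectangular diagonal matrix with diagonal entries `σ`. -/
noncomputable def svdS {n m : ℕ} (σ : Fin (min n m) → ℝ) : Matrix (Fin n) (Fin m) ℝ :=
  Matrix.of fun i j =>
    if h : (i : ℕ) = (j : ℕ) then σ ⟨i, by have := i.isLt; have := j.isLt; omega⟩ else 0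

lemma frobInner_eq_trace {n m : ℕ} (A B : Matrix (Fin n) (Fin m) ℝ) :
    frobInner A B = (Aᵀ * B).trace := by
  simp only [frobInner, Matrix.trace, Matrix.diag, Matrix.mul_apply, Matrix.transpose_apply]
  exact Finset.sum_comm

lemma frobSq_nonneg {n m : ℕ} (A : Matrix (Fin n) (Fin m) ℝ) : 0 ≤ frobSq A := by
  unfold frobSq frobInner
  refine Finset.sum_nonneg fun i _ => Finset.sum_nonneg fun j _ => mul_self_nonneg _

lemma frobSq_le_of_inner_eq {n m : ℕ} {A C : Matrix (Fin n) (Fin m) ℝ}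
    (h : frobInner A C = frobSq A) : frobSq A ≤ frobSq C := by
  have flat : ∀ (M N : Matrix (Fin n) (Fin m) ℝ),
      frobInner M N = ∑ p : Fin n × Fin m, M p.1 p.2 * N p.1 p.2 := by
    intro M N; rw [frobInner, Fintype.sum_prod_type]
  have key := Finset.sum_mul_sq_le_sq_mul_sq Finset.univ
    (fun p : Fin n × Fin m => A p.1 p.2) (fun p : Fin n × Fin m => C p.1 p.2)
  have hA2 : frobSq A = ∑ p : Fin n × Fin m, (A p.1 p.2) ^ 2 := by
    rw [frobSq, flat]; exact Finset.sum_congr rfl fun p _ => (sq (A p.1 p.2)).symm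
  have hC2 : frobSq C = ∑ p : Fin n × Fin m, (C p.1 p.2) ^ 2 := by
    rw [frobSq, flat]; exact Finset.sum_congr rfl fun p _ => (sq (C p.1 p.2)).symm
  have key2 : (frobInner A C) ^ 2 ≤ frobSq A * frobSq C := by
    rw [flat, hA2, hC2]; exact key
  rcases eq_or_lt_of_le (frobSq_nonneg A) with h0 | h0
  · exact h0 ▸ frobSq_nonneg C
  · nlinarith [key2, h, h0]

lemma svdS_mul_transpose {n m : ℕ} (σ : Fin (min n m) → ℝ) :
    svdS σ * (svdS σ)ᵀ = Matrix.diagonal (fun k : Fin n =>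
      if h : (k : ℕ) < min n m then σ ⟨k, h⟩ ^ 2 else 0) := by
  ext a b
  simp only [Matrix.mul_apply, Matrix.transpose_apply, svdS, Matrix.of_apply,
    Matrix.diagonal_apply]
  by_cases hab : a = b
  · subst hab
    by_cases ha : (a : ℕ) < m
    · rw [Finset.sum_eq_single (⟨(a : ℕ), ha⟩ : Fin m)]
      · have hmin : (a : ℕ) < min n m := lt_min a.isLt ha
        simp [hmin, sq]
      · intro j _ hj
        have : ¬ ((a : ℕ) = (j : ℕ)) := fun hh => hj (by ext; simp [← hh])
        rw [dif_neg this, zero_mul]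
      · intro hmem; exact absurd (Finset.mem_univ _) hmem
    · have hmin : ¬ ((a : ℕ) < min n m) := by omega
      rw [if_pos rfl, dif_neg hmin]
      refine Finset.sum_eq_zero fun j _ => ?_
      have : ¬ ((a : ℕ) = (j : ℕ)) := by have := j.isLt; omega
      rw [dif_neg this, zero_mul]
  · rw [if_neg hab]
    refine Finset.sum_eq_zero fun j _ => ?_
    by_cases h1 : (a : ℕ) = (j : ℕ)
    · have h2 : ¬ ((b : ℕ) = (j : ℕ)) := fun hh => hab (by ext; omega)
      rw [dif_neg h2, mul_zero]
    · rw [dif_neg h1, zero_mul]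

lemma trace_aux {n m : ℕ} (U₀ : Matrix (Fin n) (Fin n) ℝ) (V₀ : Matrix (Fin m) (Fin m) ℝ)
    (σ : Fin (min n m) → ℝ) (hV₀ : V₀ᵀ * V₀ = 1) (P : Matrix (Fin n) (Fin n) ℝ) :
    ((U₀ * svdS σ * V₀ᵀ)ᵀ * (P * (U₀ * svdS σ * V₀ᵀ))).trace
      = ∑ k : Fin n, (if h : (k : ℕ) < min n m then σ ⟨k, h⟩ ^ 2 else 0)
          * (U₀ᵀ * P * U₀) k k := by
  set S := svdS σ with hS
  set Q := U₀ᵀ * P * U₀ with hQ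
  have e1 : (U₀ * S * V₀ᵀ)ᵀ * (P * (U₀ * S * V₀ᵀ)) = V₀ * (Sᵀ * Q * S) * V₀ᵀ := by
    simp only [Matrix.transpose_mul, Matrix.transpose_transpose, hQ, Matrix.mul_assoc]
  rw [e1, Matrix.trace_mul_cycle, ← Matrix.mul_assoc, hV₀, Matrix.one_mul]
  rw [Matrix.trace_mul_cycle, hS, svdS_mul_transpose]
  simp [Matrix.trace, Matrix.diag, Matrix.diagonal_mul]

lemma diag_sq_sum {n : ℕ} (Q : Matrix (Fin n) (Fin n) ℝ) (hsym : Qᵀ = Q)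
    (hidem : Q * Q = Q) (k : Fin n) : Q k k = ∑ l, (Q k l) ^ 2 := by
  conv_lhs => rw [← hidem]
  rw [Matrix.mul_apply]
  refine Finset.sum_congr rfl fun l _ => ?_
  have : Q l k = Q k l :=
    (Matrix.transpose_apply Q k l).symm.trans (congrFun (congrFun hsym k) l)
  rw [this, sq]

lemma diag_nonneg {n : ℕ} (Q : Matrix (Fin n) (Fin n) ℝ) (hsym : Qᵀ = Q)
    (hidem : Q * Q = Q) (k : Fin n) : 0 ≤ Q k k := by
  rw [diag_sq_sum Q hsym hidem k]
  exact Finset.sum_nonneg fun l _ => sq_nonneg _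

lemma diag_le_one {n : ℕ} (Q : Matrix (Fin n) (Fin n) ℝ) (hsym : Qᵀ = Q)
    (hidem : Q * Q = Q) (k : Fin n) : Q k k ≤ 1 := by
  have h := diag_sq_sum Q hsym hidem k
  have h2 : (Q k k) ^ 2 ≤ Q k k := by
    conv_rhs => rw [h]
    exact Finset.single_le_sum (f := fun l => (Q k l) ^ 2)
      (fun l _ => sq_nonneg _) (Finset.mem_univ k)
  nlinarith [diag_nonneg Q hsym hidem k]

lemma card_lt_filter {n s : ℕ} (hsn : s ≤ n) :
    ((Finset.univ.filter (fun k : Fin n => (k : ℕ) < s)).card : ℝ) = s := by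
  rcases Nat.lt_or_ge s n with hlt | hge
  · have : Finset.univ.filter (fun k : Fin n => (k : ℕ) < s) = Finset.Iio ⟨s, hlt⟩ := by
      ext k; simp [Fin.lt_def]
    rw [this, Fin.card_Iio]
  · have hsn' : s = n := le_antisymm hsn hge
    subst hsn'
    have : Finset.univ.filter (fun k : Fin s => (k : ℕ) < s) = Finset.univ := by
      ext k; simp [k.isLt]
    rw [this]
    simp

lemma sum_reindex {n m s : ℕ} (σ : Fin (min n m) → ℝ) (hs : s < min n m) :
    ∑ k : Fin n, (if (k : ℕ) < s then
        (if h : (k : ℕ) < min n m then σ ⟨k, h⟩ ^ 2 else 0) else 0)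
      = ∑ i ∈ Finset.univ.filter (fun i : Fin (min n m) => (i : ℕ) < s), σ i ^ 2 := by
  rw [← Finset.sum_filter]
  refine Finset.sum_bij' (fun k hk => (⟨(k : ℕ), by
      simp only [Finset.mem_filter] at hk; omega⟩ : Fin (min n m)))
    (fun i hi => (⟨(i : ℕ), lt_of_lt_of_le i.isLt (min_le_left n m)⟩ : Fin n)) ?_ ?_ ?_ ?_ ?_
  · intro k hk; simp only [Finset.mem_filter] at hk ⊢; exact ⟨Finset.mem_univ _, hk.2⟩
  · intro i hi; simp only [Finset.mem_filter] at hi ⊢; exact ⟨Finset.mem_univ _, hi.2⟩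
  · intro k hk; ext; rfl
  · intro i hi; ext; rfl
  · intro k hk
    simp only [Finset.mem_filter] at hk
    have hkm : (k : ℕ) < min n m := by omega
    rw [dif_pos hkm]

lemma major {n m s : ℕ} (σ : Fin (min n m) → ℝ) (hmono : Antitone σ) (hnn : ∀ i, 0 ≤ σ i)
    (hs : s < min n m) (d : Fin n → ℝ) (hd0 : ∀ k, 0 ≤ d k) (hd1 : ∀ k, d k ≤ 1)
    (hds : ∑ k, d k ≤ (s : ℝ)) :
    ∑ k : Fin n, (if h : (k : ℕ) < min n m then σ ⟨k, h⟩ ^ 2 else 0) * d k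
      ≤ ∑ i ∈ Finset.univ.filter (fun i : Fin (min n m) => (i : ℕ) < s), σ i ^ 2 := by
  set g : Fin n → ℝ := fun k => if h : (k : ℕ) < min n m then σ ⟨k, h⟩ ^ 2 else 0 with hg
  set τ : ℝ := σ ⟨s, hs⟩ ^ 2 with hτ
  have hτ0 : 0 ≤ τ := sq_nonneg _
  have hsn : s ≤ n := le_trans (le_of_lt hs) (min_le_left n m)
  have hterm : ∀ k : Fin n, g k * d k ≤
      (if (k : ℕ) < s then g k else 0) + τ * (d k - (if (k : ℕ) < s then 1 else 0)) := by
    intro k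
    by_cases hks : (k : ℕ) < s
    · rw [if_pos hks, if_pos hks]
      have hkm : (k : ℕ) < min n m := by omega
      have hgk : g k = σ ⟨k, hkm⟩ ^ 2 := by rw [hg]; exact dif_pos hkm
      have hge : τ ≤ g k := by
        rw [hgk, hτ]
        have : σ ⟨s, hs⟩ ≤ σ ⟨k, hkm⟩ := hmono (by simp [Fin.le_def]; omega)
        exact pow_le_pow_left₀ (hnn _) this 2
      nlinarith [hd1 k, hd0 k]
    · rw [if_neg hks, if_neg hks]
      have hle : g k ≤ τ := by
        by_cases hkm : (k : ℕ) < min n m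
        · have hgk : g k = σ ⟨k, hkm⟩ ^ 2 := by rw [hg]; exact dif_pos hkm
          rw [hgk, hτ]
          have : σ ⟨k, hkm⟩ ≤ σ ⟨s, hs⟩ := hmono (by simp [Fin.le_def]; omega)
          exact pow_le_pow_left₀ (hnn _) this 2
        · have hgk : g k = 0 := by rw [hg]; exact dif_neg hkm
          rw [hgk]; exact hτ0
      have := mul_le_mul_of_nonneg_right hle (hd0 k)
      nlinarith [this]
  calc ∑ k : Fin n, g k * d k
      ≤ ∑ k : Fin n, ((if (k : ℕ) < s then g k else 0)
          + τ * (d k - (if (k : ℕ) < s then 1 else 0))) :=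
        Finset.sum_le_sum fun k _ => hterm k
    _ = (∑ k : Fin n, (if (k : ℕ) < s then g k else 0))
          + τ * ((∑ k : Fin n, d k) - (s : ℝ)) := by
        rw [Finset.sum_add_distrib, ← Finset.mul_sum]
        congr 1
        rw [Finset.sum_sub_distrib]
        congr 2
        rw [← Finset.sum_filter]
        simpa using card_lt_filter hsn
    _ ≤ ∑ k : Fin n, (if (k : ℕ) < s then g k else 0) := by nlinarith [hds]
    _ = _ := sum_reindex σ hs

lemma vecMulVec_mul_vecMulVec {n : ℕ} (u v w z : Fin n → ℝ) :
    vecMulVec u v * vecMulVec w z = (∑ l, v l * w l) • vecMulVec u z := by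
  ext i j
  simp only [Matrix.mul_apply, Matrix.vecMulVec_apply, Matrix.smul_apply, smul_eq_mul]
  rw [Finset.sum_mul]
  exact Finset.sum_congr rfl fun l _ => by ring

lemma exists_proj {n m s : ℕ} (A₁ : Matrix (Fin n) (Fin m) ℝ) (hr : A₁.rank ≤ s) :
    ∃ P : Matrix (Fin n) (Fin n) ℝ, Pᵀ = P ∧ P * P = P ∧ P.trace ≤ (s : ℝ) ∧ P * A₁ = A₁ := by
  classical
  set e : (Fin n → ℝ) ≃ₗ[ℝ] EuclideanSpace ℝ (Fin n) :=
    (WithLp.linearEquiv 2 ℝ (Fin n → ℝ)).symm with he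
  set K : Submodule ℝ (EuclideanSpace ℝ (Fin n)) :=
    Submodule.map (e : (Fin n → ℝ) →ₗ[ℝ] EuclideanSpace ℝ (Fin n))
      (Submodule.span ℝ (Set.range A₁ᵀ)) with hK
  have hfr : Module.finrank ℝ K ≤ s := by
    rw [hK, LinearEquiv.finrank_map_eq]
    exact (Matrix.rank_eq_finrank_span_cols A₁).symm.trans_le hr
  set t := Module.finrank ℝ K with ht
  have b : OrthonormalBasis (Fin t) ℝ K := stdOrthonormalBasis ℝ K
  set f : Fin t → (Fin n → ℝ) := fun a => ((b a : K) : EuclideanSpace ℝ (Fin n)) with hf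
  have O1 : ∀ a c : Fin t, ∑ l, f a l * f c l = if a = c then 1 else 0 := by
    intro a c
    have h1 := orthonormal_iff_ite.mp b.orthonormal a c
    rw [Submodule.coe_inner, PiLp.inner_apply] at h1
    simp [RCLike.inner_apply] at h1
    rw [← h1]; exact Finset.sum_congr rfl fun l _ => mul_comm _ _
  set P : Matrix (Fin n) (Fin n) ℝ := ∑ a, vecMulVec (f a) (f a) with hP
  have hPsym : Pᵀ = P := by
    rw [hP]
    ext i j
    simp [Matrix.sum_apply, Matrix.vecMulVec_apply, mul_comm]
  have hPP : P * P = P := by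
    rw [hP, Finset.sum_mul_sum]
    calc ∑ a, ∑ c, vecMulVec (f a) (f a) * vecMulVec (f c) (f c)
        = ∑ a, ∑ c, (if a = c then (1:ℝ) else 0) • vecMulVec (f a) (f c) := by
          refine Finset.sum_congr rfl fun a _ => Finset.sum_congr rfl fun c _ => ?_
          rw [_root_.vecMulVec_mul_vecMulVec, O1]
      _ = ∑ a, vecMulVec (f a) (f a) := by
          refine Finset.sum_congr rfl fun a _ => ?_
          simp [ite_smul, Finset.sum_ite_eq]
  have hPtr : P.trace ≤ (s : ℝ) := by
    rw [hP, Matrix.trace_sum]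
    have : ∀ a : Fin t, (vecMulVec (f a) (f a)).trace = 1 := by
      intro a
      have := O1 a a
      rw [if_pos rfl] at this
      rw [← this]
      simp [Matrix.trace, Matrix.diag, Matrix.vecMulVec_apply]
    rw [Finset.sum_congr rfl fun a _ => this a]
    simp only [Finset.sum_const, Finset.card_univ, Fintype.card_fin, nsmul_eq_mul, mul_one]
    exact_mod_cast hfr
  have O2 : ∀ (x : K) (i : Fin n),
      ∑ a, (∑ l, f a l * (x : EuclideanSpace ℝ (Fin n)) l) * f a i
        = (x : EuclideanSpace ℝ (Fin n)) i := by
    intro x i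
    have hx := congrArg (fun y : EuclideanSpace ℝ (Fin n) => e.symm y)
      (congrArg (Subtype.val) (b.sum_repr x))
    simp only [Submodule.coe_sum, Submodule.coe_smul, map_sum, _root_.map_smul] at hx
    have hx2 := congrFun hx i
    simp only [Finset.sum_apply, Pi.smul_apply, smul_eq_mul] at hx2
    have hrepr : ∀ a, b.repr x a = ∑ l, f a l * (x : EuclideanSpace ℝ (Fin n)) l := by
      intro a
      rw [OrthonormalBasis.repr_apply_apply, Submodule.coe_inner, PiLp.inner_apply]
      simp [RCLike.inner_apply]
      exact Finset.sum_congr rfl fun l _ => mul_comm _ _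
    calc ∑ a, (∑ l, f a l * (x : EuclideanSpace ℝ (Fin n)) l) * f a i
        = ∑ a, b.repr x a * (e.symm ((b a : K) : EuclideanSpace ℝ (Fin n))) i := by
          refine Finset.sum_congr rfl fun a _ => ?_
          rw [hrepr a]; rfl
      _ = (x : EuclideanSpace ℝ (Fin n)) i := hx2
  have hPA : P * A₁ = A₁ := by
    ext i j
    have hxmem : A₁ᵀ j ∈ Submodule.span ℝ (Set.range A₁ᵀ) := Submodule.subset_span ⟨j, rfl⟩
    have hmem : (e (A₁ᵀ j)) ∈ K := ⟨A₁ᵀ j, hxmem, rfl⟩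
    set x : K := ⟨e (A₁ᵀ j), hmem⟩ with hx
    have hxval : ∀ i', (x : EuclideanSpace ℝ (Fin n)) i' = A₁ i' j := fun _ => rfl
    have h2 := O2 x i
    rw [Matrix.mul_apply]
    have expand : ∀ l, P i l = ∑ a, f a i * f a l := by
      intro l; rw [hP]; simp [Matrix.sum_apply, Matrix.vecMulVec_apply]
    calc ∑ l, P i l * A₁ l j
        = ∑ l, ∑ a, (f a i * f a l) * A₁ l j := by
          refine Finset.sum_congr rfl fun l _ => ?_
          rw [expand l, Finset.sum_mul]
      _ = ∑ a, ∑ l, (f a i * f a l) * A₁ l j := Finset.sum_comm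
      _ = ∑ a, (∑ l, f a l * (x : EuclideanSpace ℝ (Fin n)) l) * f a i := by
          refine Finset.sum_congr rfl fun a _ => ?_
          rw [Finset.sum_mul]
          refine Finset.sum_congr rfl fun l _ => ?_
          rw [hxval l]; ring
      _ = A₁ i j := by rw [h2, hxval i]
  exact ⟨P, hPsym, hPP, hPtr, hPA⟩


/-- For `A ∈ ℝ^{n×m}` of rank `r` and `1 ≤ s < r`, the maximum of `‖UUᵀA‖²` over
`U ∈ ℝ^{n×s}` with orthonormal columns equals the maximum of `‖A₁‖²` over
`{A₁ : rank A₁ ≤ s, ⟨A₁, A⟩ = ‖A₁‖²}`, and both equal `∑_{i=1}^s σᵢ²`. -/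
theorem max_proj_eq_max_feasible {n m s r : ℕ} (hs1 : 1 ≤ s) (hsr : s < r)
    (A : Matrix (Fin n) (Fin m) ℝ) (hrank : A.rank = r)
    (U₀ : Matrix (Fin n) (Fin n) ℝ) (V₀ : Matrix (Fin m) (Fin m) ℝ)
    (σ : Fin (min n m) → ℝ) (hU₀ : U₀ᵀ * U₀ = 1) (hV₀ : V₀ᵀ * V₀ = 1)
    (hmono : Antitone σ) (hnn : ∀ i, 0 ≤ σ i) (hA : A = U₀ * svdS σ * V₀ᵀ) :
    IsGreatest {x : ℝ | ∃ U : Matrix (Fin n) (Fin s) ℝ, Uᵀ * U = 1 ∧ x = frobSq (U * Uᵀ * A)}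
        (∑ i ∈ Finset.univ.filter (fun i : Fin (min n m) => (i : ℕ) < s), σ i ^ 2) ∧
      IsGreatest {x : ℝ | ∃ A₁ : Matrix (Fin n) (Fin m) ℝ,
          A₁.rank ≤ s ∧ frobInner A₁ A = frobSq A₁ ∧ x = frobSq A₁}
        (∑ i ∈ Finset.univ.filter (fun i : Fin (min n m) => (i : ℕ) < s), σ i ^ 2) := by
  have hminA : A.rank ≤ min n m := by
    have h1 := Matrix.rank_le_card_width A
    have h2 := Matrix.rank_le_card_height A
    simp only [Fintype.card_fin] at h1 h2
    omega
  have hs : s < min n m := by omega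
  have hsn : s ≤ n := le_trans hs.le (min_le_left n m)
  have hU₀' : U₀ * U₀ᵀ = 1 := mul_eq_one_comm.mp hU₀
  set T := ∑ i ∈ Finset.univ.filter (fun i : Fin (min n m) => (i : ℕ) < s), σ i ^ 2 with hT
  -- key upper bound
  have keyP : ∀ P : Matrix (Fin n) (Fin n) ℝ, Pᵀ = P → P * P = P → P.trace ≤ (s : ℝ) →
      (Aᵀ * (P * A)).trace ≤ T := by
    intro P hsym hidem htr
    rw [hA, trace_aux U₀ V₀ σ hV₀ P]
    have hQsym : (U₀ᵀ * P * U₀)ᵀ = U₀ᵀ * P * U₀ := by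
      simp [Matrix.transpose_mul, Matrix.mul_assoc, hsym]
    have hQidem : (U₀ᵀ * P * U₀) * (U₀ᵀ * P * U₀) = U₀ᵀ * P * U₀ := by
      calc (U₀ᵀ * P * U₀) * (U₀ᵀ * P * U₀)
          = U₀ᵀ * (P * ((U₀ * U₀ᵀ) * (P * U₀))) := by simp only [Matrix.mul_assoc]
        _ = U₀ᵀ * P * U₀ := by
            rw [hU₀', Matrix.one_mul, ← Matrix.mul_assoc P P U₀, hidem,
              ← Matrix.mul_assoc]
    have hQtr : (U₀ᵀ * P * U₀).trace ≤ (s : ℝ) := by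
      rw [Matrix.trace_mul_cycle, hU₀', Matrix.one_mul]
      exact htr
    exact major σ hmono hnn hs (fun k => (U₀ᵀ * P * U₀) k k)
      (fun k => diag_nonneg _ hQsym hQidem k) (fun k => diag_le_one _ hQsym hQidem k)
      (by simpa [Matrix.trace, Matrix.diag] using hQtr)
  have hfrobP : ∀ P : Matrix (Fin n) (Fin n) ℝ, Pᵀ = P → P * P = P →
      frobSq (P * A) = (Aᵀ * (P * A)).trace := by
    intro P hsym hidem
    rw [frobSq, frobInner_eq_trace]
    congr 1
    calc (P * A)ᵀ * (P * A) = Aᵀ * (Pᵀ * (P * A)) := by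
          simp only [Matrix.transpose_mul, Matrix.mul_assoc]
      _ = Aᵀ * (P * A) := by rw [hsym, ← Matrix.mul_assoc P P A, hidem]
  -- the maximizing U
  set U : Matrix (Fin n) (Fin s) ℝ := U₀.submatrix id (Fin.castLE hsn) with hU
  have hUU : Uᵀ * U = 1 := by
    ext j k
    have h1 : (Uᵀ * U) j k = (U₀ᵀ * U₀) (Fin.castLE hsn j) (Fin.castLE hsn k) := by
      simp [Matrix.mul_apply, Matrix.submatrix_apply, Matrix.transpose_apply, hU]
    rw [h1, hU₀]
    simp [Matrix.one_apply, Fin.castLE_inj]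
  have hP1sym : (U * Uᵀ)ᵀ = U * Uᵀ := by simp [Matrix.transpose_mul]
  have hP1 : (U * Uᵀ) * (U * Uᵀ) = U * Uᵀ := by
    calc (U * Uᵀ) * (U * Uᵀ) = U * ((Uᵀ * U) * Uᵀ) := by simp only [Matrix.mul_assoc]
      _ = U * Uᵀ := by rw [hUU, Matrix.one_mul]
  have hP1tr : (U * Uᵀ).trace ≤ (s : ℝ) := by
    rw [Matrix.trace_mul_comm, hUU, Matrix.trace_one]
    simp
  have hW : ∀ (j : Fin s) (l : Fin n),
      (Uᵀ * U₀) j l = (1 : Matrix (Fin n) (Fin n) ℝ) (Fin.castLE hsn j) l := by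
    intro j l
    have h1 : (Uᵀ * U₀) j l = (U₀ᵀ * U₀) (Fin.castLE hsn j) l := by
      simp [Matrix.mul_apply, Matrix.submatrix_apply, Matrix.transpose_apply, hU]
    rw [h1, hU₀]
  have hQ1 : ∀ k : Fin n, (U₀ᵀ * (U * Uᵀ) * U₀) k k = if (k : ℕ) < s then 1 else 0 := by
    intro k
    have h1 : U₀ᵀ * (U * Uᵀ) * U₀ = (Uᵀ * U₀)ᵀ * (Uᵀ * U₀) := by
      simp only [Matrix.transpose_mul, Matrix.transpose_transpose, Matrix.mul_assoc]
    rw [h1, Matrix.mul_apply]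
    simp only [Matrix.transpose_apply]
    rw [Finset.sum_congr rfl (fun j _ => by rw [hW j k])]
    by_cases hks : (k : ℕ) < s
    · rw [if_pos hks]
      rw [Finset.sum_eq_single (⟨(k : ℕ), hks⟩ : Fin s)]
      · have : Fin.castLE hsn (⟨(k : ℕ), hks⟩ : Fin s) = k := by ext; rfl
        rw [this, Matrix.one_apply_eq, mul_one]
      · intro j _ hj
        have hne : Fin.castLE hsn j ≠ k := by
          intro hh
          have hv : (j : ℕ) = (k : ℕ) := congrArg Fin.val hh
          exact hj (Fin.val_injective hv)
        rw [Matrix.one_apply_ne hne, zero_mul]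
      · intro hmem; exact absurd (Finset.mem_univ _) hmem
    · rw [if_neg hks]
      refine Finset.sum_eq_zero fun j _ => ?_
      have hne : Fin.castLE hsn j ≠ k := by
        intro hh
        have : (j : ℕ) = (k : ℕ) := congrArg Fin.val hh
        omega
      rw [Matrix.one_apply_ne hne, zero_mul]
  have hval : frobSq (U * Uᵀ * A) = T := by
    rw [hfrobP (U * Uᵀ) hP1sym hP1, hA, trace_aux U₀ V₀ σ hV₀]
    rw [Finset.sum_congr rfl (fun k _ => by rw [hQ1 k])]
    calc ∑ k : Fin n, (if h : (k : ℕ) < min n m then σ ⟨k, h⟩ ^ 2 else 0)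
            * (if (k : ℕ) < s then 1 else 0)
        = ∑ k : Fin n, (if (k : ℕ) < s then
            (if h : (k : ℕ) < min n m then σ ⟨k, h⟩ ^ 2 else 0) else 0) := by
          refine Finset.sum_congr rfl fun k _ => ?_
          by_cases hks : (k : ℕ) < s
          · rw [if_pos hks, if_pos hks, mul_one]
          · rw [if_neg hks, if_neg hks, mul_zero]
      _ = T := sum_reindex σ hs
  refine ⟨⟨⟨U, hUU, hval.symm⟩, ?_⟩, ⟨⟨U * Uᵀ * A, ?_, ?_, hval.symm⟩, ?_⟩⟩
  · rintro x ⟨U', hU'U, rfl⟩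
    have hsym' : (U' * U'ᵀ)ᵀ = U' * U'ᵀ := by simp [Matrix.transpose_mul]
    have hidem' : (U' * U'ᵀ) * (U' * U'ᵀ) = U' * U'ᵀ := by
      calc (U' * U'ᵀ) * (U' * U'ᵀ) = U' * ((U'ᵀ * U') * U'ᵀ) := by
            simp only [Matrix.mul_assoc]
        _ = U' * U'ᵀ := by rw [hU'U, Matrix.one_mul]
    have htr' : (U' * U'ᵀ).trace ≤ (s : ℝ) := by
      rw [Matrix.trace_mul_comm, hU'U, Matrix.trace_one]
      simp
    rw [hfrobP _ hsym' hidem']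
    exact keyP _ hsym' hidem' htr'
  · calc (U * Uᵀ * A).rank = (U * (Uᵀ * A)).rank := by rw [Matrix.mul_assoc]
      _ ≤ U.rank := Matrix.rank_mul_le_left _ _
      _ ≤ s := by simpa using Matrix.rank_le_card_width U
  · rw [frobInner_eq_trace, hfrobP _ hP1sym hP1]
    congr 1
    calc (U * Uᵀ * A)ᵀ * A = Aᵀ * ((U * Uᵀ)ᵀ * A) := by
          simp only [Matrix.transpose_mul, Matrix.mul_assoc]
      _ = Aᵀ * ((U * Uᵀ) * A) := by rw [hP1sym]
  · rintro x ⟨A₁, hr1, hinner1, rfl⟩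
    obtain ⟨P, hsym, hidem, htr, hPA1⟩ := exists_proj A₁ hr1
    have hstep : frobInner A₁ (P * A) = frobSq A₁ := by
      rw [← hinner1, frobInner_eq_trace, frobInner_eq_trace]
      congr 1
      calc A₁ᵀ * (P * A) = (Pᵀ * A₁)ᵀ * A := by
            simp only [Matrix.transpose_mul, Matrix.transpose_transpose, Matrix.mul_assoc]
        _ = A₁ᵀ * A := by rw [hsym, hPA1]
    have h1 : frobSq A₁ ≤ frobSq (P * A) := frobSq_le_of_inner_eq hstep
    have h2 : frobSq (P * A) = (Aᵀ * (P * A)).trace := hfrobP P hsym hidem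
    have h3 := keyP P hsym hidem htr
    linarith
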